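/- Let V be a finite-dimensional real inner product space, let J : V → V be a linear map satisfying J² = −id and ⟨Jx, Jy⟩ = ⟨x, y⟩ for all x, y ∈ V, and let K : V → V be a linear map satisfying KJ = −JK and ⟨Kx, y⟩ = −⟨x, Ky⟩ for all x, y ∈ V. For t ∈ ℝ define J(t) = J ∘ exp(−t·J∘K), where exp denotes the exponential of a linear endomorphism. Then for every t ∈ ℝ: (i) J(t)² = −id; (ii) ⟨J(t)x, J(t)y⟩ = ⟨x, y⟩ for all x, y ∈ V; (iii) J(0) = J; and (iv) the derivative of t ↦ J(t) at t = 0 equals K. -/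

import Mathlib

open scoped RealInnerProductSpace

open NormedSpace in
/-- If `J` is a compatible complex structure on a finite-dimensional real inner product
space `V` and `K` anticommutes with `J` and is skew-adjoint, then
`J(t) = J ∘ exp(−t J K)` is a one-parameter family of compatible complex structures
with `J(0) = J` and `J'(0) = K`. -/
theorem exp_family_of_compatible_complex_structures
    (V : Type*) [NormedAddCommGroup V] [InnerProductSpace ℝ V] [FiniteDimensional ℝ V]
    (J K : V →L[ℝ] V)
    (hJ2 : ∀ x, J (J x) = -x)
    (hJi : ∀ x y, ⟪J x, J y⟫ = ⟪x, y⟫)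
    (hKJ : ∀ x, K (J x) = -J (K x))
    (hKs : ∀ x y, ⟪K x, y⟫ = -⟪x, K y⟫)
    (Jt : ℝ → V →L[ℝ] V)
    (hJt : ∀ t, Jt t = J ∘L NormedSpace.exp (-(t • (J ∘L K)))) :
    (∀ t x, Jt t (Jt t x) = -x) ∧
    (∀ t x y, ⟪Jt t x, Jt t y⟫ = ⟪x, y⟫) ∧
    Jt 0 = J ∧
    HasDerivAt Jt K 0 := by
  have := FiniteDimensional.complete ℝ V
  set A : V →L[ℝ] V := J ∘L K with hA
  have hJJ : J * J = -1 := by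
    ext x; simp [ContinuousLinearMap.mul_apply, hJ2]
  have hJinv : J * (-J) = 1 := by rw [mul_neg, hJJ]; simp
  have hJinv' : (-J) * J = 1 := by rw [neg_mul, hJJ]; simp
  set Ju : (V →L[ℝ] V)ˣ := ⟨J, -J, hJinv, hJinv'⟩ with hJu
  -- conjugation: J * exp(t•A) = exp(-(t•A)) * J
  have hconj : ∀ t : ℝ, J * exp (t • A) = exp (-(t • A)) * J := by
    intro t
    have h1 : (Ju : V →L[ℝ] V) * (t • A) * ((Ju⁻¹ : (V →L[ℝ] V)ˣ) : V →L[ℝ] V)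
        = -(t • A) := by
      show J * (t • A) * (-J) = -(t • A)
      ext x
      simp only [ContinuousLinearMap.mul_apply, ContinuousLinearMap.neg_apply,
        ContinuousLinearMap.smul_apply, hA, ContinuousLinearMap.comp_apply,
        map_neg, map_smul, hKJ, hJ2]
      simp [hJ2]
    have h2 : exp ((Ju : V →L[ℝ] V) * (t • A) * ((Ju⁻¹ : (V →L[ℝ] V)ˣ) : V →L[ℝ] V))
        = Ju * exp (t • A) * ((Ju⁻¹ : (V →L[ℝ] V)ˣ) : V →L[ℝ] V) :=
      (map_exp_of_mem_ball (𝕂 := ℝ) (MulSemiringAction.toRingHom (ConjAct (V →L[ℝ] V)ˣ)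
        (V →L[ℝ] V) (ConjAct.toConjAct Ju)) (continuous_const_smul (ConjAct.toConjAct Ju)) (t • A)
        ((expSeries_radius_eq_top ℝ (V →L[ℝ] V)).symm ▸ edist_lt_top _ _)).symm
    rw [h1] at h2
    show J * exp (t • A) = exp (-(t • A)) * J
    rw [h2]
    show J * exp (t • A) = J * exp (t • A) * (-J) * J
    rw [mul_assoc, hJinv', mul_one]
  have hconj' : ∀ t : ℝ, J * exp (-(t • A)) = exp (t • A) * J := by
    intro t
    have := hconj (-t)
    rwa [neg_smul, neg_neg] at this
  have hexpinv : ∀ t : ℝ, exp (t • A) * exp (-(t • A)) = 1 := by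
    intro t
    rw [← exp_add_of_commute_of_mem_ball (𝕂 := ℝ) ((Commute.refl (t • A)).neg_right)
      ((expSeries_radius_eq_top ℝ (V →L[ℝ] V)).symm ▸ edist_lt_top _ _)
      ((expSeries_radius_eq_top ℝ (V →L[ℝ] V)).symm ▸ edist_lt_top _ _)]
    simp
  -- A is skew-adjoint
  have hAstar : star A = -A := by
    rw [ContinuousLinearMap.star_eq_adjoint]
    apply ContinuousLinearMap.ext
    intro x
    apply ext_inner_right ℝ
    intro y
    rw [ContinuousLinearMap.adjoint_inner_left]
    show ⟪x, J (K y)⟫ = ⟪(-A) x, y⟫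
    have : ⟪(-A) x, y⟫ = -⟪J (K x), y⟫ := by
      simp [hA, ContinuousLinearMap.neg_apply]
    rw [this]
    calc ⟪x, J (K y)⟫ = ⟪J x, J (J (K y))⟫ := (hJi _ _).symm
      _ = ⟪J x, -(K y)⟫ := by rw [hJ2]
      _ = -⟪J x, K y⟫ := inner_neg_right _ _
      _ = ⟪K (J x), y⟫ := by rw [hKs (J x) y]
      _ = ⟪-(J (K x)), y⟫ := by rw [hKJ]
      _ = -⟪J (K x), y⟫ := inner_neg_left _ _
  have hstarexp : ∀ t : ℝ, star (exp (-(t • A))) = exp (t • A) := by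
    intro t
    rw [star_exp]
    congr 1
    rw [star_neg, star_smul, hAstar]
    simp
  refine ⟨?_, ?_, ?_, ?_⟩
  · -- (i)
    intro t x
    have hEJ : exp (-(t • A)) * J = J * exp (t • A) := (hconj t).symm
    have h : Jt t * Jt t = -1 := by
      rw [hJt t]
      show (J * exp (-(t • A))) * (J * exp (-(t • A))) = -1
      rw [mul_assoc, ← mul_assoc (exp (-(t • A))) J, hEJ,
        mul_assoc J (exp (t • A)), hexpinv t, mul_one, hJJ]
    have := congrArg (fun L : V →L[ℝ] V => L x) h
    simpa using this
  · -- (ii)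
    intro t x y
    rw [hJt t]
    show ⟪J (exp (-(t • A)) x), J (exp (-(t • A)) y)⟫ = ⟪x, y⟫
    rw [hJi]
    rw [← ContinuousLinearMap.adjoint_inner_right, ← ContinuousLinearMap.star_eq_adjoint,
      hstarexp t]
    have h1 : exp (t • A) ((exp (-(t • A))) y) = y := by
      have := congrArg (fun L : V →L[ℝ] V => L y) (hexpinv t)
      simpa using this
    rw [h1]
  · -- (iii)
    rw [hJt 0]
    ext x
    simp
  · -- (iv)
    have hfun : Jt = fun t : ℝ => J * exp (t • (-A)) := by
      funext t
      rw [hJt t, smul_neg]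
      rfl
    rw [hfun]
    have hd := hasDerivAt_exp_smul_const (𝕂 := ℝ) (-A) (0 : ℝ)
    have hd' : HasDerivAt (fun u : ℝ => exp (u • (-A))) (-A) 0 := by
      simpa [exp_zero] using hd
    have := hd'.const_mul J
    have hJnA : J * -A = K := by
      ext x
      simp only [mul_neg, ContinuousLinearMap.neg_apply, ContinuousLinearMap.mul_apply,
        hA, ContinuousLinearMap.comp_apply, hJ2]
      simp [hJ2]
    rwa [hJnA] at this
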